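/- arXiv:1002.2720 — 2 statements merged into one kernel-verified Lean document; each statement's English description precedes it below -/
import Mathlib

section
/- Let h₁, h₂, h₃ ∈ ℂ^{1×3} be linearly independent row vectors. Let B be the 8×6 matrix whose rows are: row r = (h_r, 0, 0, 0) for r = 1, 2, 3; row 3+r = (0, 0, 0, h_r) for r = 1, 2, 3; rows 7, 8 zero. Let v₁ = (1, 0, 0, 1, 0, 0, 1, 0)ᵀ and v₂ = (0, 1, 0, 0, 1, 0, 0, 1)ᵀ. Then the 8×8 matrix [B | v₁ | v₂] obtained by adjoining v₁ and v₂ as the last two columns of B is invertible. -/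
private lemma fv0 : ((0:Fin 8):ℕ) = 0 := rfl
private lemma fv1 : ((1:Fin 8):ℕ) = 1 := rfl
private lemma fv2 : ((2:Fin 8):ℕ) = 2 := rfl
private lemma fv3 : ((3:Fin 8):ℕ) = 3 := rfl
private lemma fv4 : ((4:Fin 8):ℕ) = 4 := rfl
private lemma fv5 : ((5:Fin 8):ℕ) = 5 := rfl
private lemma fv6 : ((6:Fin 8):ℕ) = 6 := rfl
private lemma fv7 : ((7:Fin 8):ℕ) = 7 := rfl
private lemma fm0 (p : 0 < 3) : (⟨0,p⟩:Fin 3) = 0 := rfl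
private lemma fm1 (p : 1 < 3) : (⟨1,p⟩:Fin 3) = 1 := rfl
private lemma fm2 (p : 2 < 3) : (⟨2,p⟩:Fin 3) = 2 := rfl

/-- Adjoining the aligned interference directions `v₁ = (1,0,0,1,0,0,1,0)ᵀ` and
`v₂ = (0,1,0,0,1,0,0,1)ᵀ` to the `8×6` desired-signal matrix `B` of user 1 in the
2-user `3×1` MISO BC yields an invertible `8×8` matrix, whenever the channel rows
`h₁, h₂, h₃` (here `h 0, h 1, h 2`) are linearly independent. -/
theorem two_user_3x1_MISO_BC_signal_interference_independent
    (h : Fin 3 → Fin 3 → ℂ) (hli : LinearIndependent ℂ h)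
    (B : Matrix (Fin 8) (Fin 6) ℂ)
    (hB : ∀ (r : Fin 8) (c : Fin 6), B r c =
      if hr : (r : ℕ) < 3 then
        (if hc : (c : ℕ) < 3 then h ⟨(r : ℕ), hr⟩ ⟨(c : ℕ), hc⟩ else 0)
      else if hr6 : (r : ℕ) < 6 then
        (if hc : 3 ≤ (c : ℕ) then
          h ⟨(r : ℕ) - 3, by omega⟩ ⟨(c : ℕ) - 3, by have := c.isLt; omega⟩ else 0)
      else 0) :
    IsUnit (Matrix.of (fun (r : Fin 8) (c : Fin 8) =>
      if hc : (c : ℕ) < 6 then B r ⟨(c : ℕ), hc⟩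
      else if (c : ℕ) = 6 then (![1, 0, 0, 1, 0, 0, 1, 0] : Fin 8 → ℂ) r
      else (![0, 1, 0, 0, 1, 0, 0, 1] : Fin 8 → ℂ) r)) := by
  rw [← Matrix.linearIndependent_rows_iff_isUnit]
  rw [Fintype.linearIndependent_iff] at hli ⊢
  intro g hg
  have hcol : ∀ c : Fin 8,
      (∑ r : Fin 8, g r * (if hc : (c : ℕ) < 6 then B r ⟨(c : ℕ), hc⟩
      else if (c : ℕ) = 6 then (![1, 0, 0, 1, 0, 0, 1, 0] : Fin 8 → ℂ) r
      else (![0, 1, 0, 0, 1, 0, 0, 1] : Fin 8 → ℂ) r)) = 0 := by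
    intro c
    have := congrFun hg c
    simpa [Finset.sum_apply, Matrix.of_apply] using this
  have key1 : ∀ j : Fin 3, g 0 * h 0 j + g 1 * h 1 j + g 2 * h 2 j = 0 := by
    intro j
    have := hcol ⟨(j:ℕ), by omega⟩
    rw [Fin.sum_univ_eight] at this
    simp only [hB, fv0, fv1, fv2, fv3, fv4, fv5, fv6, fv7] at this
    have hj3 : (j:ℕ) < 3 := j.isLt
    simp only [dif_pos (show (j:ℕ) < 6 by omega), dif_pos hj3,
      dif_pos (show (0:ℕ) < 3 by norm_num), dif_pos (show (1:ℕ) < 3 by norm_num),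
      dif_pos (show (2:ℕ) < 3 by norm_num),
      dif_neg (show ¬(3:ℕ) < 3 by norm_num), dif_neg (show ¬(4:ℕ) < 3 by norm_num),
      dif_neg (show ¬(5:ℕ) < 3 by norm_num), dif_neg (show ¬(6:ℕ) < 3 by norm_num),
      dif_neg (show ¬(7:ℕ) < 3 by norm_num),
      dif_neg (show ¬3 ≤ (j:ℕ) by omega),
      dif_pos (show (3:ℕ) < 6 by norm_num), dif_pos (show (4:ℕ) < 6 by norm_num),
      dif_pos (show (5:ℕ) < 6 by norm_num),
      dif_neg (show ¬(6:ℕ) < 6 by norm_num), dif_neg (show ¬(7:ℕ) < 6 by norm_num),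
      fm0, fm1, fm2, Fin.eta] at this
    simpa using this
  have key2 : ∀ j : Fin 3, g 3 * h 0 j + g 4 * h 1 j + g 5 * h 2 j = 0 := by
    intro j
    have := hcol ⟨(j:ℕ) + 3, by omega⟩
    rw [Fin.sum_univ_eight] at this
    simp only [hB, fv0, fv1, fv2, fv3, fv4, fv5, fv6, fv7] at this
    simp only [dif_pos (show (j:ℕ) + 3 < 6 by omega),
      dif_neg (show ¬(j:ℕ) + 3 < 3 by omega),
      dif_pos (show (0:ℕ) < 3 by norm_num), dif_pos (show (1:ℕ) < 3 by norm_num),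
      dif_pos (show (2:ℕ) < 3 by norm_num),
      dif_neg (show ¬(3:ℕ) < 3 by norm_num), dif_neg (show ¬(4:ℕ) < 3 by norm_num),
      dif_neg (show ¬(5:ℕ) < 3 by norm_num), dif_neg (show ¬(6:ℕ) < 3 by norm_num),
      dif_neg (show ¬(7:ℕ) < 3 by norm_num),
      dif_pos (show 3 ≤ (j:ℕ) + 3 by omega),
      dif_pos (show (3:ℕ) < 6 by norm_num), dif_pos (show (4:ℕ) < 6 by norm_num),
      dif_pos (show (5:ℕ) < 6 by norm_num),
      dif_neg (show ¬(6:ℕ) < 6 by norm_num), dif_neg (show ¬(7:ℕ) < 6 by norm_num),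
      show (3:ℕ) - 3 = 0 from rfl, show (4:ℕ) - 3 = 1 from rfl,
      show (5:ℕ) - 3 = 2 from rfl, Nat.add_sub_cancel,
      fm0, fm1, fm2, Fin.eta] at this
    simpa using this
  have h012 : ∀ i : Fin 3, (![g 0, g 1, g 2] : Fin 3 → ℂ) i = 0 := by
    apply hli
    funext j
    have := key1 j
    simp [Fin.sum_univ_three]
    linear_combination this
  have h345 : ∀ i : Fin 3, (![g 3, g 4, g 5] : Fin 3 → ℂ) i = 0 := by
    apply hli
    funext j
    have := key2 j
    simp [Fin.sum_univ_three]
    linear_combination this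
  have g0 := h012 0; have g1 := h012 1; have g2 := h012 2
  have g3 := h345 0; have g4 := h345 1; have g5 := h345 2
  simp only [Matrix.cons_val_zero, Matrix.cons_val_one, Matrix.head_cons,
    Matrix.cons_val_two, Matrix.tail_cons] at g0 g1 g2 g3 g4 g5
  have c6 := hcol 6
  have c7 := hcol 7
  rw [Fin.sum_univ_eight] at c6 c7
  simp only [fv6, fv7,
    dif_neg (show ¬(6:ℕ) < 6 by norm_num), dif_neg (show ¬(7:ℕ) < 6 by norm_num),
    if_pos (rfl : (6:ℕ) = 6), if_neg (show ¬(7:ℕ) = 6 by norm_num),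
    show (![1, 0, 0, 1, 0, 0, 1, 0] : Fin 8 → ℂ) 0 = 1 from rfl,
    show (![1, 0, 0, 1, 0, 0, 1, 0] : Fin 8 → ℂ) 1 = 0 from rfl,
    show (![1, 0, 0, 1, 0, 0, 1, 0] : Fin 8 → ℂ) 2 = 0 from rfl,
    show (![1, 0, 0, 1, 0, 0, 1, 0] : Fin 8 → ℂ) 3 = 1 from rfl,
    show (![1, 0, 0, 1, 0, 0, 1, 0] : Fin 8 → ℂ) 4 = 0 from rfl,
    show (![1, 0, 0, 1, 0, 0, 1, 0] : Fin 8 → ℂ) 5 = 0 from rfl,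
    show (![1, 0, 0, 1, 0, 0, 1, 0] : Fin 8 → ℂ) 6 = 1 from rfl,
    show (![1, 0, 0, 1, 0, 0, 1, 0] : Fin 8 → ℂ) 7 = 0 from rfl,
    show (![0, 1, 0, 0, 1, 0, 0, 1] : Fin 8 → ℂ) 0 = 0 from rfl,
    show (![0, 1, 0, 0, 1, 0, 0, 1] : Fin 8 → ℂ) 1 = 1 from rfl,
    show (![0, 1, 0, 0, 1, 0, 0, 1] : Fin 8 → ℂ) 2 = 0 from rfl,
    show (![0, 1, 0, 0, 1, 0, 0, 1] : Fin 8 → ℂ) 3 = 0 from rfl,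
    show (![0, 1, 0, 0, 1, 0, 0, 1] : Fin 8 → ℂ) 4 = 1 from rfl,
    show (![0, 1, 0, 0, 1, 0, 0, 1] : Fin 8 → ℂ) 5 = 0 from rfl,
    show (![0, 1, 0, 0, 1, 0, 0, 1] : Fin 8 → ℂ) 6 = 0 from rfl,
    show (![0, 1, 0, 0, 1, 0, 0, 1] : Fin 8 → ℂ) 7 = 1 from rfl,
    mul_one, mul_zero, add_zero, zero_add] at c6 c7
  have g6 : g 6 = 0 := by rw [g0, g3] at c6; simpa using c6
  have g7 : g 7 = 0 := by rw [g1, g4] at c7; simpa using c7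
  intro i
  fin_cases i <;> assumption
end

section
/- Let M ≥ 2, K ≥ 2 and let h₁, …, h_M ∈ ℂ^{1×M} be linearly independent row vectors. Consider the (K(M−1)+1) × (M + (K−1)(M−1)) complex matrix G defined in blocks as follows: rows 1, …, M−1 are [h_r | e_rᵀ | e_rᵀ | ⋯ | e_rᵀ] for r = 1, …, M−1 (first M columns equal h_r, followed by K−1 copies of the r-th standard basis row of length M−1); for j = 1, …, K−1, rows (M−1)j+1, …, (M−1)(j+1) are [0 | 0 | ⋯ | I_{M−1} | ⋯ | 0] with the (M−1)×(M−1) identity in block position j among the K−1 trailing blocks and zeros elsewhere; and the last row is [h_M | 0 | ⋯ | 0]. Then G has full column rank M + (K−1)(M−1). -/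
lemma sum_fin_extend {n N : ℕ} (hnN : n ≤ N) (F : ℕ → ℂ) (hF : ∀ t, n ≤ t → F t = 0) :
    ∑ c : Fin N, F (c : ℕ) = ∑ c : Fin n, F (c : ℕ) := by
  rw [Fin.sum_univ_eq_sum_range, Fin.sum_univ_eq_sum_range]
  exact (Finset.sum_subset (Finset.range_subset_range.mpr hnN)
    (fun t _ ht => hF t (by simpa using ht))).symm

/-- The effective channel matrix `G` of one alignment block at a receiver of the
`K`-user `M×1` MISO BC: rows `1, …, M−1` are `[h_r | e_rᵀ | ⋯ | e_rᵀ]`, the next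
`K−1` blocks of `M−1` rows carry the identity `I_{M−1}` in the corresponding
trailing block, and the last row is `[h_M | 0 | ⋯ | 0]`. If `h₁, …, h_M` are
linearly independent then `G` has full column rank `M + (K−1)(M−1)`. -/
theorem K_user_Mx1_MISO_BC_alignment_block_full_column_rank (M K : ℕ)
    (hM : 2 ≤ M) (hK : 2 ≤ K)
    (h : Fin M → Fin M → ℂ) (hli : LinearIndependent ℂ h)
    (G : Matrix (Fin (K * (M - 1) + 1)) (Fin (M + (K - 1) * (M - 1))) ℂ)
    (hG : ∀ (r : Fin (K * (M - 1) + 1)) (c : Fin (M + (K - 1) * (M - 1))),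
      G r c =
        if hr : (r : ℕ) < M - 1 then
          (if hc : (c : ℕ) < M then h ⟨(r : ℕ), by omega⟩ ⟨(c : ℕ), hc⟩
           else (if ((c : ℕ) - M) % (M - 1) = (r : ℕ) then 1 else 0))
        else if hr2 : (r : ℕ) < K * (M - 1) then
          (if M ≤ (c : ℕ) ∧ ((c : ℕ) - M) / (M - 1) + 1 = (r : ℕ) / (M - 1) ∧
              ((c : ℕ) - M) % (M - 1) = (r : ℕ) % (M - 1)
           then 1 else 0)
        else
          (if hc : (c : ℕ) < M then h ⟨M - 1, by omega⟩ ⟨(c : ℕ), hc⟩ else 0)) :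
    G.rank = M + (K - 1) * (M - 1) := by
  obtain ⟨m, rfl⟩ : ∃ m, M = m + 2 := ⟨M - 2, by omega⟩
  obtain ⟨k, rfl⟩ : ∃ k, K = k + 2 := ⟨K - 2, by omega⟩
  have hm1 : (0:ℕ) < m + 1 := Nat.succ_pos m
  have hsub1 : m + 2 - 1 = m + 1 := rfl
  have hsub2 : k + 2 - 1 = k + 1 := rfl
  have hNN : (k + 2 - 1) * (m + 2 - 1) = (k + 1) * (m + 1) := by rw [hsub1, hsub2]
  have hNN2 : (k + 2) * (m + 2 - 1) = (k + 2) * (m + 1) := by rw [hsub1]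
  have hmul2 : (k + 2) * (m + 1) = (k + 1) * (m + 1) + (m + 1) := by ring
  have hNle : m + 2 ≤ m + 2 + (k + 2 - 1) * (m + 2 - 1) := Nat.le_add_right _ _
  have hinj : Function.Injective G.mulVecLin := by
    rw [← LinearMap.ker_eq_bot, LinearMap.ker_eq_bot']
    intro v hv
    have hv' : ∀ r, ∑ c, G r c * v c = 0 := by
      intro r
      have := congrFun hv r
      simpa [Matrix.mulVecLin_apply, Matrix.mulVec, dotProduct] using this
    -- Step 1: trailing coordinates vanish
    have hy : ∀ c : Fin (m + 2 + (k + 2 - 1) * (m + 2 - 1)), m + 2 ≤ (c : ℕ) → v c = 0 := by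
      intro c hc
      have hclt : (c : ℕ) < m + 2 + (k + 2 - 1) * (m + 2 - 1) := c.isLt
      obtain ⟨j, s, hjk, hslt, hts⟩ :
          ∃ j s, j < k + 1 ∧ s < m + 1 ∧ (c : ℕ) - (m + 2) = (m + 1) * j + s := by
        refine ⟨((c : ℕ) - (m + 2)) / (m + 1), ((c : ℕ) - (m + 2)) % (m + 1), ?_,
          Nat.mod_lt _ hm1, (Nat.div_add_mod _ _).symm⟩
        rw [Nat.div_lt_iff_lt_mul hm1]
        omega
      have hmul1 : (j + 1) * (m + 1) ≤ (k + 1) * (m + 1) :=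
        Nat.mul_le_mul_right _ (by omega)
      have hmul3 : m + 1 ≤ (j + 1) * (m + 1) := Nat.le_mul_of_pos_left _ (by omega)
      have hRlt : s + (j + 1) * (m + 1) < (k + 2) * (m + 2 - 1) + 1 := by omega
      set r : Fin ((k + 2) * (m + 2 - 1) + 1) := ⟨s + (j + 1) * (m + 1), hRlt⟩ with hr
      have hrval : (r : ℕ) = s + (j + 1) * (m + 1) := rfl
      have hrmod : (r : ℕ) % (m + 1) = s := by
        rw [hrval, Nat.add_mul_mod_self_right]; exact Nat.mod_eq_of_lt hslt
      have hrdiv : (r : ℕ) / (m + 1) = j + 1 := by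
        rw [hrval, Nat.add_mul_div_right _ _ hm1, Nat.div_eq_of_lt hslt, zero_add]
      have hrge : ¬ ((r : ℕ) < m + 1) := by rw [hrval]; omega
      have hrmid : (r : ℕ) < (k + 2) * (m + 1) := by rw [hrval]; omega
      have h0 := hv' r
      rw [Finset.sum_eq_single c ?_ (by simp)] at h0
      · rw [hG] at h0
        simp only [hsub1, hsub2] at h0
        rw [dif_neg hrge, dif_pos hrmid, if_pos ?_] at h0
        · simpa using h0
        · refine ⟨by omega, ?_, ?_⟩
          · rw [hrdiv, hts, Nat.mul_add_div hm1, Nat.div_eq_of_lt hslt, add_zero]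
          · rw [hrmod, hts, Nat.mul_add_mod, Nat.mod_eq_of_lt hslt]
      · intro c' _ hne
        rw [hG]
        simp only [hsub1, hsub2]
        rw [dif_neg hrge, dif_pos hrmid, if_neg, zero_mul]
        rintro ⟨hc1, hc2, hc3⟩
        rw [hrdiv] at hc2
        rw [hrmod] at hc3
        apply hne
        apply Fin.ext
        have hq : ((c' : ℕ) - (m + 2)) / (m + 1) = j := by omega
        have hceq : (c' : ℕ) - (m + 2) = (m + 1) * j + s := by
          conv_lhs => rw [← Nat.div_add_mod ((c' : ℕ) - (m + 2)) (m + 1)]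
          rw [hq, hc3]
        have hfin : (c' : ℕ) - (m + 2) = (c : ℕ) - (m + 2) := hceq.trans hts.symm
        omega
    -- Step 2: the first M rows of the system give H x = 0
    have hrowsum : ∀ i : Fin (m + 2),
        ∑ c : Fin (m + 2), h i c * v (Fin.castLE hNle c) = 0 := by
      intro i
      set F : ℕ → ℂ := fun tt =>
        if htt : tt < m + 2 then h i ⟨tt, htt⟩ * v ⟨tt, Nat.lt_of_lt_of_le htt hNle⟩ else 0
        with hF
      have hFzero : ∀ tt, m + 2 ≤ tt → F tt = 0 := fun tt htt => dif_neg (by omega)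
      have hFsum : ∑ c : Fin (m + 2 + (k + 2 - 1) * (m + 2 - 1)), F (c : ℕ) = 0 := by
        by_cases hi : (i : ℕ) < m + 1
        · have hmul4 : m + 1 ≤ (k + 2) * (m + 1) := Nat.le_mul_of_pos_left _ (by omega)
          have hRlt : (i : ℕ) < (k + 2) * (m + 2 - 1) + 1 := by omega
          have h0 := hv' ⟨(i : ℕ), hRlt⟩
          rw [← h0]
          refine Finset.sum_congr rfl fun c' _ => ?_
          rw [hG]
          simp only [hsub1, hsub2, Fin.val_mk]
          by_cases hc' : (c' : ℕ) < m + 2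
          · rw [dif_pos hi, dif_pos hc', hF]
            simp only
            rw [dif_pos hc']
          · rw [dif_pos hi, dif_neg hc', hy c' (by omega), mul_zero, hF]
            simp only
            rw [dif_neg hc']
        · have hival : (i : ℕ) = m + 1 := by have := i.isLt; omega
          have hmul4 : m + 1 ≤ (k + 2) * (m + 1) := Nat.le_mul_of_pos_left _ (by omega)
          have hRlt : (k + 2) * (m + 1) < (k + 2) * (m + 2 - 1) + 1 := by omega
          have h0 := hv' ⟨(k + 2) * (m + 1), hRlt⟩
          rw [← h0]
          refine Finset.sum_congr rfl fun c' _ => ?_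
          rw [hG]
          simp only [hsub1, hsub2, Fin.val_mk]
          rw [dif_neg (by omega), dif_neg (by omega)]
          by_cases hc' : (c' : ℕ) < m + 2
          · rw [dif_pos hc', hF]
            simp only
            rw [dif_pos hc',
              show (⟨m + 1, by omega⟩ : Fin (m + 2)) = i from Fin.ext hival.symm]
          · rw [dif_neg hc', hy c' (by omega), mul_zero, hF]
            simp only
            rw [dif_neg hc']
      rw [sum_fin_extend hNle F hFzero] at hFsum
      rw [← hFsum]
      refine Finset.sum_congr rfl fun c _ => ?_
      rw [hF]
      simp only
      rw [dif_pos c.isLt]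
      rfl
    -- conclude x = 0 from invertibility of h
    have hH : IsUnit (Matrix.of h) :=
      Matrix.linearIndependent_rows_iff_isUnit.mp
        (show LinearIndependent ℂ (fun i => Matrix.of h i) from hli)
    have hHinj : Function.Injective (Matrix.of h).mulVec :=
      Matrix.mulVec_injective_iff_isUnit.mpr hH
    have hx0 : (fun c => v (Fin.castLE hNle c)) = 0 := by
      apply hHinj
      rw [Matrix.mulVec_zero]
      funext i
      simpa [Matrix.mulVec, dotProduct] using hrowsum i
    funext c
    by_cases hc : (c : ℕ) < m + 2
    · have hcast : Fin.castLE hNle ⟨(c : ℕ), hc⟩ = c := Fin.ext rfl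
      have := congrFun hx0 ⟨(c : ℕ), hc⟩
      rw [hcast] at this
      simpa using this
    · exact hy c (by omega)
  rw [Matrix.rank, LinearMap.finrank_range_of_inj hinj, Module.finrank_fin_fun]
end
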